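/- Appendix operator identity II: For every smooth function f : ℝ → ℝ, setting g(x) = −( b·Q(x)·f'(x) + Q'(x)·f(x) ), one has for all x ∈ ℝ: (α·g')'(x) + b(b+1)·α(x)·g(x) = −b·Q(x)^{−1/b−1}·( f'''(x) − f'(x) ) + ((b²−b³)/(2k))·f'(x). -/

import Mathlib

open Real MeasureTheory Filter

noncomputable section

/-- `ν = -(b+1)/2`. -/
def nuP (b : ℝ) : ℝ := -(b + 1) / 2

/-- The lefton momentum profile `Q(x) = (A(1-b)/2) (cosh(νx))^{b/ν}`. -/
def Qp (b A : ℝ) (x : ℝ) : ℝ :=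
  A * (1 - b) / 2 * Real.cosh (nuP b * x) ^ (b / nuP b)

/-- The lefton velocity profile `q(x) = A (cosh(νx))^{-1/ν}`. -/
def qp (b A : ℝ) (x : ℝ) : ℝ := A * Real.cosh (nuP b * x) ^ (-1 / nuP b)

/-- `k = (A(1-b)/2)^{1/b+1}`. -/
def kP (b A : ℝ) : ℝ := (A * (1 - b) / 2) ^ (1 / b + 1)

/-- The weight `α(x) = Q(x)^{-1/b-2}`. -/
def alphaP (b A : ℝ) (x : ℝ) : ℝ := Qp b A x ^ (-1 / b - 2)

/-- `SQ(x) = (2k(1-b)/b) Q^{-1/b} + (2(b-1)/b) Q`. -/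
def SQp (b A : ℝ) (x : ℝ) : ℝ :=
  2 * kP b A * (1 - b) / b * Qp b A x ^ (-1 / b) + 2 * (b - 1) / b * Qp b A x

/-- The Pöschl–Teller potential `H̃₀(x) = 1/4 - (b(1+2b)/4) sech²(νx)`. -/
def Htilde0 (b : ℝ) (x : ℝ) : ℝ :=
  1 / 4 - b * (1 + 2 * b) / 4 * (1 / Real.cosh (nuP b * x)) ^ 2

/-- The Schrödinger operator `(Hg)(x) = (2k/b²)(−g'' + H̃₀ g)`. -/
def Hop (b A : ℝ) (g : ℝ → ℝ) (x : ℝ) : ℝ :=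
  2 * kP b A / b ^ 2 * (-(deriv (deriv g) x) + Htilde0 b x * g x)

/-- The linearized operator `(𝓛f)(x) = k(−((2α/b²) f')' − (2(b+1)/b) α f)`. -/
def Lop (b A : ℝ) (f : ℝ → ℝ) (x : ℝ) : ℝ :=
  kP b A * (-(deriv (fun y => 2 * alphaP b A y / b ^ 2 * deriv f y) x)
    - 2 * (b + 1) / b * alphaP b A x * f x)

/-- The integrand of the conserved functional `F₂`. -/
def F2Integrand (b : ℝ) (f : ℝ → ℝ) (x : ℝ) : ℝ :=
  f x ^ (-1 / b) * ((deriv f x) ^ 2 / (b ^ 2 * f x ^ 2) + 1)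

/-- The squared weighted norm `‖f‖²_{H¹_α} = ∫ (f² + f'²) α`. -/
def HalphaSq (b A : ℝ) (f : ℝ → ℝ) : ℝ :=
  ∫ x, (f x ^ 2 + deriv f x ^ 2) * alphaP b A x

/-- The `𝒵`-norm `‖f‖_𝒵 = ‖f‖_{H¹_α} + sup_x |f(x)|/Q(x)`. -/
def ZNorm (b A : ℝ) (f : ℝ → ℝ) : ℝ :=
  Real.sqrt (HalphaSq b A f) + ⨆ x : ℝ, |f x| / Qp b A x

/-- `m : ℝ → ℝ → ℝ` (time then space) solves the b-family equation in momentum form,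
with velocity `u` satisfying `m = u - u_xx` and `m_t + u m_x + b u_x m = 0`. -/
def IsBFamilySolution (b : ℝ) (m u : ℝ → ℝ → ℝ) : Prop :=
  (∀ t x, m t x = u t x - deriv (deriv (u t)) x) ∧
  ∀ t x, deriv (fun s => m s x) t + u t x * deriv (m t) x + b * deriv (u t) x * m t x = 0

/-- `(v, h)` solves the linearization of the b-family equation around the lefton:
`h - h_xx = v` and `v_t = ∂_x(q h_xx + (b-1) q' h_x - (b+1) q h + q'' h)`. -/
def IsLinearizedSolution (b A : ℝ) (v h : ℝ → ℝ → ℝ) : Prop :=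
  (∀ t x, h t x - deriv (deriv (h t)) x = v t x) ∧
  ∀ t x, deriv (fun s => v s x) t =
    deriv (fun y => qp b A y * deriv (deriv (h t)) y
      + (b - 1) * deriv (qp b A) y * deriv (h t) y
      - (b + 1) * qp b A y * h t y + deriv (deriv (qp b A)) y * h t y) x

/-- The quadratic form `(𝓛η, η) = (2k/b²)∫ η'² α − (2k(b+1)/b)∫ η² α`. -/
def quadFormL (b A : ℝ) (η : ℝ → ℝ) : ℝ :=
  2 * kP b A / b ^ 2 * (∫ x, deriv η x ^ 2 * alphaP b A x)
    - 2 * kP b A * (b + 1) / b * (∫ x, η x ^ 2 * alphaP b A x)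

/-- The monotonicity weight `ψ_L(x) = (2/π) arctan(exp(νx/L))` with `L = 3 - b`. -/
def psiL (b : ℝ) (x : ℝ) : ℝ :=
  2 / Real.pi * Real.arctan (Real.exp (nuP b * x / (3 - b)))

/-- Derivative of `tanh (c x)`. -/
lemma hasDerivAt_tanh_mul (c y : ℝ) :
    HasDerivAt (fun z => Real.tanh (c * z)) (c * (1 - Real.tanh (c * y) ^ 2)) y := by
  have h1 : HasDerivAt (fun z : ℝ => c * z) c y := by
    simpa using (hasDerivAt_id y).const_mul c
  have hs := h1.sinh
  have hc := h1.cosh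
  have hcn : Real.cosh (c * y) ≠ 0 := (Real.cosh_pos _).ne'
  have hd : HasDerivAt (fun z => Real.sinh (c * z) / Real.cosh (c * z)) _ y := hs.div hc hcn
  have hfun : (fun z => Real.sinh (c * z) / Real.cosh (c * z))
      = fun z => Real.tanh (c * z) := by
    funext z; rw [Real.tanh_eq_sinh_div_cosh]
  rw [hfun] at hd
  convert hd using 1
  rw [Real.tanh_eq_sinh_div_cosh]
  field_simp

/-- **Appendix operator identity II**: for smooth `f`, with `g = −(b Q f' + Q' f)`,
`(α g')' + b(b+1) α g = −b Q^{−1/b−1}(f''' − f') + ((b²−b³)/(2k)) f'`. -/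
theorem appendix_operator_identity_II (b A : ℝ) (hb : b < -1) (hA : 0 < A)
    (f : ℝ → ℝ) (hf : ContDiff ℝ (⊤ : ℕ∞) f) :
    ∀ x : ℝ,
      deriv (fun y => alphaP b A y
          * deriv (fun z => -(b * Qp b A z * deriv f z + deriv (Qp b A) z * f z)) y) x
        + b * (b + 1) * alphaP b A x
          * (-(b * Qp b A x * deriv f x + deriv (Qp b A) x * f x))
      = -b * Qp b A x ^ (-1 / b - 1) * (deriv (deriv (deriv f)) x - deriv f x)
        + (b ^ 2 - b ^ 3) / (2 * kP b A) * deriv f x := by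
  intro x
  have hb0 : b ≠ 0 := by linarith
  have hb1 : b + 1 ≠ 0 := by linarith
  have hC : 0 < A * (1 - b) / 2 := by nlinarith
  have hνpos : 0 < nuP b := by unfold nuP; linarith
  have hν0 : nuP b ≠ 0 := ne_of_gt hνpos
  have hQpos : ∀ y, 0 < Qp b A y := fun y => by
    unfold Qp; positivity
  have hkpos : 0 < kP b A := by
    unfold kP; positivity
  -- differentiability of f and its derivatives
  have hdf : Differentiable ℝ f := hf.differentiable (by simp)
  have hf' : ContDiff ℝ (⊤ : ℕ∞) (deriv f) := (contDiff_infty_iff_deriv.mp hf).2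
  have hdf' : Differentiable ℝ (deriv f) := hf'.differentiable (by simp)
  have hf'' : ContDiff ℝ (⊤ : ℕ∞) (deriv (deriv f)) := (contDiff_infty_iff_deriv.mp hf').2
  have hdf'' : Differentiable ℝ (deriv (deriv f)) := hf''.differentiable (by simp)
  -- derivative of Q
  have hQ : ∀ y, HasDerivAt (Qp b A) (b * Real.tanh (nuP b * y) * Qp b A y) y := by
    intro y
    have h1 : HasDerivAt (fun z : ℝ => nuP b * z) (nuP b) y := by
      simpa using (hasDerivAt_id y).const_mul (nuP b)
    have hcy := h1.cosh
    have h := (hcy.rpow_const (p := b / nuP b) (Or.inl (Real.cosh_pos (nuP b * y)).ne')).const_mul (A * (1 - b) / 2)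
    have hfun : (fun z => A * (1 - b) / 2 * Real.cosh (nuP b * z) ^ (b / nuP b))
        = Qp b A := rfl
    rw [hfun] at h
    refine h.congr_deriv (Eq.symm ?_)
    rw [Real.tanh_eq_sinh_div_cosh,
      Real.rpow_sub_one (Real.cosh_pos (nuP b * y)).ne']
    show b * (Real.sinh (nuP b * y) / Real.cosh (nuP b * y)) * Qp b A y = _
    rw [Qp]
    field_simp
  have hQd : deriv (Qp b A) = fun y => b * Real.tanh (nuP b * y) * Qp b A y :=
    funext fun y => (hQ y).deriv
  -- derivative of α
  have hαd : ∀ y, HasDerivAt (alphaP b A)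
      (-(1 + 2 * b) * Real.tanh (nuP b * y) * alphaP b A y) y := by
    intro y
    have h := (hQ y).rpow_const (p := -1 / b - 2) (Or.inl (hQpos y).ne')
    have hfun : (fun z => Qp b A z ^ (-1 / b - 2)) = alphaP b A := rfl
    rw [hfun] at h
    convert h using 1
    rw [Real.rpow_sub_one (hQpos y).ne']
    show -(1 + 2 * b) * Real.tanh (nuP b * y) * alphaP b A y = _
    rw [alphaP]
    field_simp [(hQpos y).ne']
    ring
  -- first derivative of g
  have hg : ∀ y, HasDerivAt
      (fun z => -(b * Qp b A z * deriv f z + b * Real.tanh (nuP b * z) * Qp b A z * f z))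
      (-(b * Qp b A y * deriv (deriv f) y
        + b * (b + 1) * Real.tanh (nuP b * y) * Qp b A y * deriv f y
        + (b * nuP b * (1 - Real.tanh (nuP b * y) ^ 2)
            + b ^ 2 * Real.tanh (nuP b * y) ^ 2) * Qp b A y * f y)) y := by
    intro y
    have tA := ((hQ y).const_mul b).mul (hdf' y).hasDerivAt
    have tB := (((hasDerivAt_tanh_mul (nuP b) y).const_mul b).mul (hQ y)).mul
      (hdf y).hasDerivAt
    have h := (tA.add tB).neg
    refine h.congr_deriv ?_
    simp only [Pi.mul_apply, Pi.add_apply, Pi.neg_apply]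
    ring
  -- the inner function rewritten
  have hfun2 : (fun y => alphaP b A y
        * deriv (fun z => -(b * Qp b A z * deriv f z + deriv (Qp b A) z * f z)) y)
      = (fun y => alphaP b A y
        * (-(b * Qp b A y * deriv (deriv f) y
          + b * (b + 1) * Real.tanh (nuP b * y) * Qp b A y * deriv f y
          + (b * nuP b * (1 - Real.tanh (nuP b * y) ^ 2)
              + b ^ 2 * Real.tanh (nuP b * y) ^ 2) * Qp b A y * f y))) := by
    funext y
    simp only [hQd]
    rw [(hg y).deriv]
  -- derivative of the outer function
  have hTx := hasDerivAt_tanh_mul (nuP b) x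
  have tA := ((hQ x).const_mul b).mul (hdf'' x).hasDerivAt
  have tB := (((hTx.const_mul (b * (b + 1))).mul (hQ x)).mul (hdf' x).hasDerivAt)
  have tC12 := (((hTx.pow 2).const_sub 1).const_mul (b * nuP b)).add
    ((hTx.pow 2).const_mul (b ^ 2))
  have tC := (tC12.mul (hQ x)).mul (hdf x).hasDerivAt
  have houter : HasDerivAt (fun y => alphaP b A y
      * (-(b * Qp b A y * deriv (deriv f) y
        + b * (b + 1) * Real.tanh (nuP b * y) * Qp b A y * deriv f y
        + (b * nuP b * (1 - Real.tanh (nuP b * y) ^ 2)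
            + b ^ 2 * Real.tanh (nuP b * y) ^ 2) * Qp b A y * f y))) _ x :=
    (hαd x).mul ((tA.add tB).add tC).neg
  -- algebraic relations
  have r1 : alphaP b A x * Qp b A x = Qp b A x ^ (-1 / b - 1) := by
    rw [alphaP, ← Real.rpow_add_one (hQpos x).ne' (-1 / b - 2),
      show (-1 / b - 2 + 1 : ℝ) = -1 / b - 1 by ring]
  have r2 : Qp b A x ^ (-1 / b - 1) = Real.cosh (nuP b * x) ^ 2 / kP b A := by
    rw [Qp, kP, Real.mul_rpow hC.le (Real.rpow_pos_of_pos (Real.cosh_pos _) _).le,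
      ← Real.rpow_natCast (Real.cosh (nuP b * x)) 2,
      ← Real.rpow_mul (Real.cosh_pos (nuP b * x)).le]
    have he : b / nuP b * (-1 / b - 1) = ((2 : ℕ) : ℝ) := by
      have ht : -b - b ^ 2 < 0 := by nlinarith
      have hinv : (-b - b ^ 2) * (-b - b ^ 2)⁻¹ = 1 := mul_inv_cancel₀ ht.ne
      unfold nuP
      field_simp
      push_cast; ring
    rw [he]
    have hk2 : (0 : ℝ) < (A * (1 - b) / 2) ^ (1 / b + 1) := Real.rpow_pos_of_pos hC _
    rw [eq_div_iff hk2.ne', mul_right_comm, ← Real.rpow_add hC,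
      show (-1 / b - 1) + (1 / b + 1) = (0 : ℝ) by ring, Real.rpow_zero, one_mul]
  have r4 : alphaP b A x * Qp b A x * Real.tanh (nuP b * x) ^ 2
      = alphaP b A x * Qp b A x - 1 / kP b A := by
    rw [r1, r2, Real.tanh_eq_sinh_div_cosh]
    rw [div_pow, div_mul_div_comm]
    rw [Real.sinh_sq]
    field_simp
  -- put everything together
  rw [hfun2, houter.deriv, hQd, ← r1]
  simp only [nuP, Pi.mul_apply, Pi.add_apply, Pi.pow_apply, Pi.sub_apply, Pi.neg_apply] at r4 ⊢
  linear_combination ((b ^ 3 - b ^ 2) / 2 * deriv f x) * r4
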